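/- Let N ≥ 1, M ∈ ℤ, and let g : ℕ → ℂ be any function. Then (1/N) · Σ_{k=1}^{N} e^{2πiMk/N} · Σ_{s | gcd(k,N)} s · g(N/s) = Σ_{s | gcd(M,N)} g(s). -/

import Mathlib

open Complex BigOperators

lemma root_sum (d : ℕ) (hd : 0 < d) (M : ℤ) :
    ∑ j ∈ Finset.Icc 1 d, Complex.exp (2 * Real.pi * Complex.I * M * j / d)
      = if (d : ℤ) ∣ M then (d : ℂ) else 0 := by
  have hd0 : (d : ℂ) ≠ 0 := Nat.cast_ne_zero.mpr hd.ne'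
  have hπ : (Real.pi : ℂ) ≠ 0 := by exact_mod_cast Real.pi_ne_zero
  have hI := Complex.I_ne_zero
  set ζ : ℂ := Complex.exp (2 * Real.pi * Complex.I * M / d) with hζ
  have hterm : ∀ j : ℕ, Complex.exp (2 * Real.pi * Complex.I * M * j / d) = ζ ^ j := by
    intro j
    rw [hζ, ← Complex.exp_nat_mul]
    ring_nf
  have hζd : ζ ^ d = 1 := by
    rw [hζ, ← Complex.exp_nat_mul]
    have : (d : ℂ) * (2 * Real.pi * Complex.I * M / d) = M * (2 * Real.pi * Complex.I) := by
      field_simp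
    rw [this]
    exact Complex.exp_int_mul_two_pi_mul_I M
  by_cases hdvd : (d : ℤ) ∣ M
  · have hζ1 : ζ = 1 := by
      obtain ⟨m, hm⟩ := hdvd
      rw [hζ]
      have : 2 * (Real.pi : ℂ) * Complex.I * M / d = m * (2 * Real.pi * Complex.I) := by
        have : (M : ℂ) = d * m := by exact_mod_cast hm
        rw [this]; field_simp
      rw [this]
      exact Complex.exp_int_mul_two_pi_mul_I m
    simp only [hterm, hζ1, one_pow, Finset.sum_const, Nat.card_Icc, smul_eq_mul, mul_one, hdvd,
      if_true]
    simp
  · have hζ1 : ζ ≠ 1 := by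
      intro h
      rw [hζ, Complex.exp_eq_one_iff] at h
      obtain ⟨n, hn⟩ := h
      apply hdvd
      refine ⟨n, ?_⟩
      have h2 : (2 * (Real.pi : ℂ) * Complex.I) * M = (2 * Real.pi * Complex.I) * (d * n) := by
        field_simp at hn
        linear_combination (2 * Real.pi * Complex.I) * hn
      have h3 : (M : ℂ) = d * n :=
        mul_left_cancel₀ (by simp [hπ, hI]) h2
      exact_mod_cast h3
    have h1 : ∑ j ∈ Finset.Icc 1 d, ζ ^ j = ∑ j ∈ Finset.range d, ζ ^ (j + 1) := by
      rw [← Finset.Ico_add_one_right_eq_Icc, Finset.sum_Ico_eq_sum_range]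
      simp [add_comm]
    have h2 : ∑ j ∈ Finset.range (d + 1), ζ ^ j
        = (∑ j ∈ Finset.range d, ζ ^ (j + 1)) + ζ ^ 0 := Finset.sum_range_succ' _ _
    have h3 : ∑ j ∈ Finset.range (d + 1), ζ ^ j
        = (∑ j ∈ Finset.range d, ζ ^ j) + ζ ^ d := Finset.sum_range_succ _ _
    rw [hζd] at h3
    rw [pow_zero] at h2
    have hshift : ∑ j ∈ Finset.Icc 1 d, ζ ^ j = ∑ j ∈ Finset.range d, ζ ^ j := by
      rw [h1]
      exact add_right_cancel (h2.symm.trans h3)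
    rw [if_neg hdvd]
    simp only [hterm]
    rw [hshift, geom_sum_eq hζ1, hζd, sub_self, zero_div]

/-- Projection onto the `θ = 2πM/N` superselection sector:
`(1/N) Σ_{k=1}^{N} e^{2πiMk/N} Σ_{s|gcd(k,N)} s·g(N/s) = Σ_{s|gcd(M,N)} g(s)`. -/
theorem theta_sector_projection (N : ℕ) (hN : 1 ≤ N) (M : ℤ) (g : ℕ → ℂ) :
    (1 / (N : ℂ)) * ∑ k ∈ Finset.Icc 1 N,
        Complex.exp (2 * Real.pi * Complex.I * M * k / N) *
          ∑ s ∈ (Nat.gcd k N).divisors, (s : ℂ) * g (N / s)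
      = ∑ s ∈ (Int.gcd M N).divisors, g s := by
  have hN0 : N ≠ 0 := by omega
  have hNc : (N : ℂ) ≠ 0 := Nat.cast_ne_zero.mpr hN0
  have hgcd : ∀ k, (Nat.gcd k N).divisors = N.divisors.filter (· ∣ k) := by
    intro k
    ext s
    simp only [Nat.mem_divisors, Finset.mem_filter, Nat.dvd_gcd_iff]
    constructor
    · rintro ⟨⟨h1, h2⟩, -⟩; exact ⟨⟨h2, hN0⟩, h1⟩
    · rintro ⟨⟨h2, -⟩, h1⟩
      exact ⟨⟨h1, h2⟩, Nat.gcd_ne_zero_right hN0⟩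
  have step1 : ∑ k ∈ Finset.Icc 1 N,
        Complex.exp (2 * Real.pi * Complex.I * M * k / N) *
          ∑ s ∈ (Nat.gcd k N).divisors, (s : ℂ) * g (N / s)
      = ∑ s ∈ N.divisors,
          (∑ k ∈ (Finset.Icc 1 N).filter (s ∣ ·),
            Complex.exp (2 * Real.pi * Complex.I * M * k / N)) * ((s : ℂ) * g (N / s)) := by
    simp_rw [hgcd, Finset.mul_sum, Finset.sum_filter]
    rw [Finset.sum_comm]
    simp_rw [← Finset.sum_filter, Finset.sum_mul]
  have step2 : ∀ s ∈ N.divisors,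
      ∑ k ∈ (Finset.Icc 1 N).filter (s ∣ ·),
          Complex.exp (2 * Real.pi * Complex.I * M * k / N)
        = if ((N / s : ℕ) : ℤ) ∣ M then ((N / s : ℕ) : ℂ) else 0 := by
    intro s hs
    rw [Nat.mem_divisors] at hs
    obtain ⟨hsN, -⟩ := hs
    have hs0 : 0 < s := Nat.pos_of_dvd_of_pos hsN (by omega)
    have hd0 : 0 < N / s := Nat.div_pos (Nat.le_of_dvd (by omega) hsN) hs0
    have hds : ((N / s : ℕ) : ℂ) * (s : ℂ) = (N : ℂ) := by
      exact_mod_cast congrArg (Nat.cast : ℕ → ℂ) (Nat.div_mul_cancel hsN)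
    rw [← root_sum (N / s) hd0 M]
    refine Finset.sum_bij' (fun k _ => k / s) (fun j _ => s * j) ?_ ?_ ?_ ?_ ?_
    · intro k hk
      simp only [Finset.mem_filter, Finset.mem_Icc] at hk
      obtain ⟨⟨hk1, hk2⟩, hsk⟩ := hk
      simp only [Finset.mem_Icc]
      constructor
      · exact Nat.one_le_div_iff hs0 |>.mpr (Nat.le_of_dvd (by omega) hsk)
      · exact Nat.div_le_div_right hk2
    · intro j hj
      simp only [Finset.mem_Icc] at hj
      simp only [Finset.mem_filter, Finset.mem_Icc]
      refine ⟨⟨by nlinarith [hj.1, hs0], ?_⟩, Dvd.intro j rfl⟩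
      calc s * j ≤ s * (N / s) := Nat.mul_le_mul_left s hj.2
        _ = N := Nat.mul_div_cancel' hsN
    · intro k hk
      simp only [Finset.mem_filter] at hk
      exact Nat.mul_div_cancel' hk.2
    · intro j _
      exact Nat.mul_div_cancel_left j hs0
    · intro k hk
      simp only [Finset.mem_filter] at hk
      obtain ⟨-, hsk⟩ := hk
      congr 1
      obtain ⟨j, rfl⟩ := hsk
      simp only [Nat.mul_div_cancel_left j hs0]
      have : ((s * j : ℕ) : ℂ) = (s : ℂ) * j := by push_cast; ring
      rw [this]
      have hne : ((N / s : ℕ) : ℂ) ≠ 0 := by exact_mod_cast hd0.ne'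
      rw [div_eq_div_iff hNc hne, ← hds]
      ring
  rw [step1, Finset.sum_congr rfl fun s hs => by rw [step2 s hs]]
  have step3 : ∑ s ∈ N.divisors,
      (if ((N / s : ℕ) : ℤ) ∣ M then ((N / s : ℕ) : ℂ) else 0) * ((s : ℂ) * g (N / s))
      = ∑ d ∈ N.divisors,
          (if (d : ℤ) ∣ M then (d : ℂ) else 0) * (((N / d : ℕ) : ℂ) * g d) := by
    rw [← Nat.sum_div_divisors N
      (fun d => (if (d : ℤ) ∣ M then (d : ℂ) else 0) * (((N / d : ℕ) : ℂ) * g d))]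
    refine Finset.sum_congr rfl fun s hs => ?_
    rw [Nat.mem_divisors] at hs
    rw [Nat.div_div_self hs.1 hN0]
  rw [step3, Finset.mul_sum]
  have step4 : ∀ d ∈ N.divisors,
      1 / (N : ℂ) * ((if (d : ℤ) ∣ M then (d : ℂ) else 0) * (((N / d : ℕ) : ℂ) * g d))
      = if (d : ℤ) ∣ M then g d else 0 := by
    intro d hd
    rw [Nat.mem_divisors] at hd
    have hdN : ((d : ℕ) : ℂ) * ((N / d : ℕ) : ℂ) = (N : ℂ) := by
      exact_mod_cast congrArg (Nat.cast : ℕ → ℂ) (Nat.mul_div_cancel' hd.1)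
    split_ifs with h
    · field_simp
      rw [← hdN]
    · ring
  rw [Finset.sum_congr rfl step4, Finset.sum_ite, Finset.sum_const_zero, add_zero]
  refine Finset.sum_congr ?_ fun _ _ => rfl
  ext d
  simp only [Finset.mem_filter, Nat.mem_divisors, Int.gcd]
  constructor
  · rintro ⟨⟨hdN, -⟩, hdM⟩
    refine ⟨Nat.dvd_gcd ?_ ?_, ?_⟩
    · exact Int.natCast_dvd_natCast.mp (Int.dvd_natAbs.mpr hdM)
    · simpa using hdN
    · simp [Nat.gcd_eq_zero_iff, hN0]
  · rintro ⟨hd, -⟩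
    have h1 := hd.trans (Nat.gcd_dvd_left _ _)
    have h2 := hd.trans (Nat.gcd_dvd_right _ _)
    refine ⟨⟨by simpa using h2, hN0⟩, ?_⟩
    exact Int.dvd_natAbs.mp (Int.natCast_dvd_natCast.mpr h1)
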